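/- Let ε > 0 and let Φ : V → W be a linear map between inner product spaces with dim V = dim W = m, such that ‖Φv₁ ∧ Φv₂‖ ≤ ε‖v₁ ∧ v₂‖ for all v₁, v₂ ∈ V (area ε-decreasing). Then |det Φ| ≤ ε^{m/2} when m is even, and more generally |det Φ| ≤ ε^{⌊m/2⌋}·‖Φ‖ for odd m, where ‖Φ‖ is the operator norm. In particular, if ε < 1 and ‖Φ‖ ≤ 1 then |det Φ| < 1. -/

import Mathlib

noncomputable def wedgeNorm {V : Type*} [NormedAddCommGroup V] [InnerProductSpace ℝ V]
    (v w : V) : ℝ :=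
  Real.sqrt (‖v‖ ^ 2 * ‖w‖ ^ 2 - (inner ℝ v w : ℝ) ^ 2)

private lemma prodPair : ∀ (m : ℕ) (a : ℕ → ℝ) (c N : ℝ), 0 ≤ c → 0 ≤ N →
    (∀ i, 0 ≤ a i) → (∀ i j, i ≠ j → a i * a j ≤ c) → (∀ i, a i ≤ N) →
    ∏ i ∈ Finset.range m, a i ≤ c ^ (m / 2) * N ^ (m % 2)
  | 0, a, c, N, hc, hN, h0, hp, hb => by simp
  | 1, a, c, N, hc, hN, h0, hp, hb => by simpa using hb 0
  | (n + 2), a, c, N, hc, hN, h0, hp, hb => by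
    have IH := prodPair n a c N hc hN h0 hp hb
    have h2 : (n + 2) / 2 = n / 2 + 1 := by omega
    have h3 : (n + 2) % 2 = n % 2 := by omega
    rw [Finset.prod_range_succ, Finset.prod_range_succ, mul_assoc, h2, h3, pow_succ]
    calc (∏ i ∈ Finset.range n, a i) * (a n * a (n + 1))
        ≤ (c ^ (n / 2) * N ^ (n % 2)) * c :=
          mul_le_mul IH (hp n (n + 1) (by omega))
            (mul_nonneg (h0 n) (h0 (n + 1)))
            (mul_nonneg (pow_nonneg hc _) (pow_nonneg hN _))
      _ = c ^ (n / 2) * c * N ^ (n % 2) := by ring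

theorem stmt19 {V : Type*} [NormedAddCommGroup V] [InnerProductSpace ℝ V]
    [FiniteDimensional ℝ V] (m : ℕ) (hm : Module.finrank ℝ V = m)
    (Φ : V →L[ℝ] V) (ε : ℝ) (hε : 0 < ε)
    (h : ∀ v₁ v₂ : V, wedgeNorm (Φ v₁) (Φ v₂) ≤ ε * wedgeNorm v₁ v₂) :
    (Even m → |LinearMap.det (Φ : V →ₗ[ℝ] V)| ≤ ε ^ (m / 2)) ∧
    |LinearMap.det (Φ : V →ₗ[ℝ] V)| ≤ ε ^ (m / 2) * ‖Φ‖ ^ (m % 2) ∧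
    (ε < 1 → ‖Φ‖ ≤ 1 → 2 ≤ m → |LinearMap.det (Φ : V →ₗ[ℝ] V)| < 1) := by
  set ΦL : V →ₗ[ℝ] V := (Φ : V →ₗ[ℝ] V) with hΦL
  set T : V →ₗ[ℝ] V := LinearMap.adjoint ΦL * ΦL with hTdef
  have hT : T.IsSymmetric := LinearMap.isSymmetric_adjoint_mul_self ΦL
  set b := hT.eigenvectorBasis hm with hb
  set μ := hT.eigenvalues hm with hμ
  -- inner products through T
  have hinner : ∀ v w : V, (inner ℝ (Φ v) (Φ w) : ℝ) = inner ℝ (T v) w := by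
    intro v w
    rw [hTdef]
    simp only [Module.End.mul_apply]
    rw [LinearMap.adjoint_inner_left]
    rfl
  have happly : ∀ i, T (b i) = μ i • b i := fun i => hT.apply_eigenvectorBasis hm i
  have hbnorm : ∀ i, ‖b i‖ = 1 := fun i => b.orthonormal.1 i
  have hborth : ∀ i j, i ≠ j → (inner ℝ (b i) (b j) : ℝ) = 0 :=
    fun i j hij => b.orthonormal.2 hij
  -- μ i = ‖Φ (b i)‖ ^ 2
  have hμval : ∀ i, μ i = ‖Φ (b i)‖ ^ 2 := by
    intro i
    have := hinner (b i) (b i)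
    rw [happly i, real_inner_smul_left, real_inner_self_eq_norm_sq,
      real_inner_self_eq_norm_sq, hbnorm i] at this
    simpa using this.symm
  have hμnonneg : ∀ i, 0 ≤ μ i := fun i => (hμval i) ▸ sq_nonneg _
  have hμle : ∀ i, μ i ≤ ‖Φ‖ ^ 2 := by
    intro i
    rw [hμval i]
    have h1 : ‖Φ (b i)‖ ≤ ‖Φ‖ := by
      calc ‖Φ (b i)‖ ≤ ‖Φ‖ * ‖b i‖ := Φ.le_opNorm _
        _ = ‖Φ‖ := by rw [hbnorm i, mul_one]
    exact pow_le_pow_left₀ (norm_nonneg _) h1 2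
  -- pairwise bound : μ i * μ j ≤ ε ^ 2 for i ≠ j
  have hpair : ∀ i j, i ≠ j → μ i * μ j ≤ ε ^ 2 := by
    intro i j hij
    have hio : (inner ℝ (Φ (b i)) (Φ (b j)) : ℝ) = 0 := by
      rw [hinner, happly i, real_inner_smul_left, hborth i j hij, mul_zero]
    have hw1 : wedgeNorm (b i) (b j) = 1 := by
      unfold wedgeNorm
      rw [hbnorm i, hbnorm j, hborth i j hij]
      norm_num
    have hw2 : wedgeNorm (Φ (b i)) (Φ (b j)) = Real.sqrt (μ i * μ j) := by
      unfold wedgeNorm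
      rw [hio, hμval i, hμval j]
      ring_nf
    have hle := h (b i) (b j)
    rw [hw1, hw2, mul_one] at hle
    calc μ i * μ j = Real.sqrt (μ i * μ j) ^ 2 :=
          (Real.sq_sqrt (mul_nonneg (hμnonneg i) (hμnonneg j))).symm
      _ ≤ ε ^ 2 := pow_le_pow_left₀ (Real.sqrt_nonneg _) hle 2
  -- det T = ∏ μ
  have hmat : LinearMap.toMatrix b.toBasis b.toBasis T = Matrix.diagonal μ := by
    ext i j
    rw [LinearMap.toMatrix_apply, OrthonormalBasis.coe_toBasis, happly j, map_smul]
    simp [Matrix.diagonal, Module.Basis.repr_self, Finsupp.single_apply, eq_comm]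
    by_cases hij : i = j <;> simp [hij]
  have hdetT : LinearMap.det T = ∏ i, μ i := by
    rw [← LinearMap.det_toMatrix b.toBasis, hmat, Matrix.det_diagonal]
  -- det T = (det Φ) ^ 2
  have hdetT2 : LinearMap.det T = (LinearMap.det ΦL) ^ 2 := by
    have hadj : LinearMap.det (LinearMap.adjoint ΦL) = LinearMap.det ΦL := by
      rw [← LinearMap.det_toMatrix b.toBasis, LinearMap.toMatrix_adjoint b b,
        Matrix.det_conjTranspose, ← LinearMap.det_toMatrix b.toBasis ΦL]
      rfl
    have : LinearMap.adjoint ΦL * ΦL = (LinearMap.adjoint ΦL).comp ΦL := rfl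
    rw [hTdef, this, LinearMap.det_comp, hadj, sq]
  -- apply the product pairing lemma
  set R : ℝ := ε ^ (m / 2) * ‖Φ‖ ^ (m % 2) with hR
  have hRnonneg : 0 ≤ R :=
    mul_nonneg (pow_nonneg hε.le _) (pow_nonneg (norm_nonneg _) _)
  have hprod : ∏ i, μ i ≤ R ^ 2 := by
    set a : ℕ → ℝ := fun i => if hi : i < m then μ ⟨i, hi⟩ else 0 with ha
    have h1 : ∏ i, μ i = ∏ i ∈ Finset.range m, a i := by
      rw [← Fin.prod_univ_eq_prod_range]
      exact Finset.prod_congr rfl fun i _ => by simp [ha, i.isLt]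
    have h2 : ∏ i ∈ Finset.range m, a i ≤ (ε ^ 2) ^ (m / 2) * (‖Φ‖ ^ 2) ^ (m % 2) := by
      apply prodPair m a (ε ^ 2) (‖Φ‖ ^ 2) (sq_nonneg _) (sq_nonneg _)
      · intro i
        by_cases hi : i < m <;> simp [ha, hi, hμnonneg]
      · intro i j hij
        by_cases hi : i < m
        · by_cases hj : j < m
          · simp only [ha, dif_pos hi, dif_pos hj]
            exact hpair ⟨i, hi⟩ ⟨j, hj⟩ (by simp [Fin.ext_iff, hij])
          · simp [ha, hi, hj, sq_nonneg]
        · simp [ha, hi, sq_nonneg]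
      · intro i
        by_cases hi : i < m
        · simp only [ha, dif_pos hi]; exact hμle _
        · simp [ha, hi, sq_nonneg]
    rw [h1, hR]
    calc ∏ i ∈ Finset.range m, a i ≤ (ε ^ 2) ^ (m / 2) * (‖Φ‖ ^ 2) ^ (m % 2) := h2
      _ = (ε ^ (m / 2) * ‖Φ‖ ^ (m % 2)) ^ 2 := by ring
  -- conclude |det Φ| ≤ R
  have hmain : |LinearMap.det ΦL| ≤ R := by
    have hsq : (LinearMap.det ΦL) ^ 2 ≤ R ^ 2 := by
      rw [← hdetT2, hdetT]; exact hprod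
    calc |LinearMap.det ΦL| = Real.sqrt ((LinearMap.det ΦL) ^ 2) :=
          (Real.sqrt_sq_eq_abs _).symm
      _ ≤ Real.sqrt (R ^ 2) := Real.sqrt_le_sqrt hsq
      _ = R := Real.sqrt_sq hRnonneg
  refine ⟨fun hEven => ?_, hmain, fun hε1 hΦ1 hm2 => ?_⟩
  · have : m % 2 = 0 := Nat.even_iff.mp hEven
    rw [hR, this, pow_zero, mul_one] at hmain
    exact hmain
  · calc |LinearMap.det ΦL| ≤ R := hmain
      _ ≤ ε ^ (m / 2) := by
          rw [hR]
          exact mul_le_of_le_one_right (pow_nonneg hε.le _)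
            (pow_le_one₀ (norm_nonneg _) hΦ1)
      _ < 1 := pow_lt_one₀ hε.le hε1 (by omega)
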